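/- Let X, X_1, ..., X_N be exchangeable random variables with values in a measurable space X, and let T : X × X^{N+1} → R be a measurable function such that T(x; x_0, x_1, ..., x_N) is invariant under permutations of (x_0, x_1, ..., x_N). Define π := (#{i ∈ {1,...,N} : T(X_i; X, X_1, ..., X_N) ≥ T(X; X, X_1, ..., X_N)} + 1)/(N+1). Then P(π ≤ α) ≤ α for every α ∈ (0,1). -/

import Mathlib

open MeasureTheory

open Finset

lemma aux_card {n m : ℕ} (y : Fin n → ℝ) :
    (Finset.univ.filter fun j : Fin n =>
      (Finset.univ.filter fun i => y j ≤ y i).card ≤ m).card ≤ m := by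
  set S := Finset.univ.filter fun j : Fin n =>
      (Finset.univ.filter fun i => y j ≤ y i).card ≤ m with hS
  rcases S.eq_empty_or_nonempty with h | h
  · simp [h]
  · obtain ⟨j, hj, hmin⟩ := S.exists_min_image y h
    have hsub : S ⊆ Finset.univ.filter fun i => y j ≤ y i := by
      intro a ha
      simp only [Finset.mem_filter, Finset.mem_univ, true_and]
      exact hmin a ha
    have hjm : (Finset.univ.filter fun i => y j ≤ y i).card ≤ m := by
      simpa [hS] using hj
    exact le_trans (Finset.card_le_card hsub) hjm

lemma aux_perm {n : ℕ} (σ : Equiv.Perm (Fin n)) (p : Fin n → Prop) [DecidablePred p] :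
    (Finset.univ.filter fun i => p (σ i)).card = (Finset.univ.filter p).card := by
  apply Finset.card_bij (fun i _ => σ i)
  · intro a ha; simp_all
  · intro a ha b hb hab; exact σ.injective hab
  · intro b hb; exact ⟨σ.symm b, by simp_all, by simp⟩

lemma aux_succ {N : ℕ} (p : Fin (N+1) → Prop) [DecidablePred p] (h0 : p 0) :
    (Finset.univ.filter p).card
      = (Finset.univ.filter fun i : Fin N => p i.succ).card + 1 := by
  rw [Fin.univ_succ, Finset.filter_cons, if_pos h0, Finset.card_cons, Finset.filter_map,
    Finset.card_map]
  rfl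

/-- validity of the permutation p-value based on a test statistic
`T` that is symmetric in the pooled sample `(X, X_1, ..., X_N) = (W 0, ..., W N)`. -/
theorem stmt7 {Ω 𝓧 : Type*} [MeasurableSpace Ω] [MeasurableSpace 𝓧]
    (P : Measure Ω) [IsProbabilityMeasure P]
    {N : ℕ} (W : Ω → Fin (N + 1) → 𝓧)
    (hmeas : Measurable W)
    (hexch : ∀ σ : Equiv.Perm (Fin (N + 1)),
      Measure.map (fun ω => W ω ∘ σ) P = Measure.map W P)
    (T : 𝓧 → (Fin (N + 1) → 𝓧) → ℝ)
    (hTmeas : Measurable fun p : 𝓧 × (Fin (N + 1) → 𝓧) => T p.1 p.2)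
    (hTsym : ∀ (x : 𝓧) (v : Fin (N + 1) → 𝓧) (σ : Equiv.Perm (Fin (N + 1))),
      T x (v ∘ σ) = T x v)
    (π : Ω → ℝ)
    (hπ : ∀ ω, π ω =
      (((Finset.univ.filter fun i : Fin N =>
          T (W ω 0) (W ω) ≤ T (W ω i.succ) (W ω)).card : ℝ) + 1) / (N + 1)) :
    ∀ α ∈ Set.Ioo (0:ℝ) 1, (P {ω | π ω ≤ α}).toReal ≤ α := by
  classical
  intro α hα
  obtain ⟨hα0, hα1⟩ := hα
  -- the symmetrized statistic
  set G : (Fin (N + 1) → 𝓧) → (Fin (N + 1) → ℝ) := fun v i => T (v i) v with hG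
  have hGmeas : Measurable G := by
    apply measurable_pi_lambda
    intro i
    have : Measurable fun v : Fin (N + 1) → 𝓧 => T (v i) v :=
      hTmeas.comp (Measurable.prodMk (measurable_pi_apply i) measurable_id)
    exact this
  set Y : Ω → Fin (N + 1) → ℝ := fun ω => G (W ω) with hY
  have hYmeas : Measurable Y := hGmeas.comp hmeas
  -- the threshold
  set m : ℕ := Nat.floor (α * (N + 1)) with hm
  -- the events
  set B : Fin (N + 1) → Set (Fin (N + 1) → ℝ) := fun j =>
    {y | (Finset.univ.filter fun i => y j ≤ y i).card ≤ m} with hB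
  have hBmeas : ∀ j, MeasurableSet (B j) := by
    intro j
    have hcard : Measurable fun y : Fin (N + 1) → ℝ =>
        (Finset.univ.filter fun i => y j ≤ y i).card := by
      simp only [Finset.card_filter]
      apply Finset.measurable_sum
      intro i _
      exact Measurable.ite (measurableSet_le (measurable_pi_apply j) (measurable_pi_apply i))
        measurable_const measurable_const
    exact hcard (measurableSet_le measurable_id measurable_const : MeasurableSet {n : ℕ | n ≤ m})
  -- exchangeability of the Y's: P(Y ∈ B j) = P(Y ∈ B 0)
  have hYσ : ∀ σ : Equiv.Perm (Fin (N + 1)), ∀ ω, Y ω ∘ σ = G (W ω ∘ σ) := by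
    intro σ ω
    funext i
    simp only [hY, hG, Function.comp_apply]
    rw [hTsym]
  have hBperm : ∀ j : Fin (N + 1),
      B j = (fun y : Fin (N + 1) → ℝ => y ∘ Equiv.swap 0 j) ⁻¹' B 0 := by
    intro j
    ext y
    simp only [hB, Set.mem_setOf_eq, Set.mem_preimage, Function.comp_apply,
      Equiv.swap_apply_left]
    rw [aux_perm (Equiv.swap 0 j) (fun i => y j ≤ y i)]
  have hmapσ : ∀ σ : Equiv.Perm (Fin (N + 1)),
      Measure.map (fun ω => Y ω ∘ σ) P = Measure.map Y P := by
    intro σ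
    have h1 : (fun ω => Y ω ∘ σ) = G ∘ (fun ω => W ω ∘ σ) := by
      funext ω; exact hYσ σ ω
    have hWσ : Measurable fun ω => W ω ∘ σ := by
      apply measurable_pi_lambda
      intro i
      exact (measurable_pi_apply (σ i)).comp hmeas
    rw [h1, ← Measure.map_map hGmeas hWσ, hexch σ, Measure.map_map hGmeas hmeas]
    rfl
  have hPeq : ∀ j : Fin (N + 1), P (Y ⁻¹' B j) = P (Y ⁻¹' B 0) := by
    intro j
    have hc : Measurable fun y : Fin (N + 1) → ℝ => y ∘ Equiv.swap 0 j := by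
      apply measurable_pi_lambda
      intro i
      exact measurable_pi_apply _
    calc P (Y ⁻¹' B j) = P ((fun ω => Y ω ∘ Equiv.swap 0 j) ⁻¹' B 0) := by
          rw [hBperm j]; rfl
      _ = Measure.map (fun ω => Y ω ∘ Equiv.swap 0 j) P (B 0) :=
          (Measure.map_apply (hc.comp hYmeas) (hBmeas 0)).symm
      _ = Measure.map Y P (B 0) := by rw [hmapσ]
      _ = P (Y ⁻¹' B 0) := Measure.map_apply hYmeas (hBmeas 0)
  -- sum of the indicator functions is at most m
  have hsum : ∑ j : Fin (N + 1), P (Y ⁻¹' B j) ≤ (m : ENNReal) := by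
    have h1 : ∀ j : Fin (N + 1), P (Y ⁻¹' B j)
        = ∫⁻ ω, (Y ⁻¹' B j).indicator 1 ω ∂P := by
      intro j
      rw [lintegral_indicator_one (hYmeas (hBmeas j))]
    calc ∑ j : Fin (N + 1), P (Y ⁻¹' B j)
        = ∫⁻ ω, ∑ j : Fin (N + 1), (Y ⁻¹' B j).indicator 1 ω ∂P := by
          rw [lintegral_finset_sum]
          · exact Finset.sum_congr rfl fun j _ => h1 j
          · intro j _
            exact (measurable_one.indicator (hYmeas (hBmeas j)))
      _ ≤ ∫⁻ _, (m : ENNReal) ∂P := by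
          apply lintegral_mono
          intro ω
          show ∑ j : Fin (N + 1), (Y ⁻¹' B j).indicator 1 ω ≤ (m : ENNReal)
          have : ∑ j : Fin (N + 1), (Y ⁻¹' B j).indicator 1 ω
              = ((Finset.univ.filter fun j : Fin (N + 1) => ω ∈ Y ⁻¹' B j).card : ENNReal)
              := by
            rw [Finset.card_filter]
            push_cast
            apply Finset.sum_congr rfl
            intro j _
            by_cases h : ω ∈ Y ⁻¹' B j <;> simp [h, Set.indicator]
          rw [this]
          have hkey : (Finset.univ.filter fun j : Fin (N + 1) => ω ∈ Y ⁻¹' B j).card ≤ m := by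
            have : (Finset.univ.filter fun j : Fin (N + 1) => ω ∈ Y ⁻¹' B j)
                = Finset.univ.filter fun j : Fin (N + 1) =>
                  (Finset.univ.filter fun i => Y ω j ≤ Y ω i).card ≤ m := by
              apply Finset.filter_congr
              intro j _
              simp [hB, Set.mem_setOf_eq]
            rw [this]
            exact aux_card (Y ω)
          exact Nat.cast_le.mpr hkey
      _ = (m : ENNReal) := by simp
  -- hence P(Y ∈ B 0) ≤ m / (N+1)
  have hbound : P (Y ⁻¹' B 0) ≤ (m : ENNReal) / (N + 1) := by
    have h2 : ((N : ENNReal) + 1) * P (Y ⁻¹' B 0) ≤ (m : ENNReal) := by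
      calc ((N : ENNReal) + 1) * P (Y ⁻¹' B 0)
          = ∑ _j : Fin (N + 1), P (Y ⁻¹' B 0) := by
            rw [Finset.sum_const, Finset.card_univ, Fintype.card_fin, nsmul_eq_mul]
            push_cast
            ring
        _ = ∑ j : Fin (N + 1), P (Y ⁻¹' B j) := (Finset.sum_congr rfl fun j _ => (hPeq j).symm)
        _ ≤ (m : ENNReal) := hsum
    have hne0 : ((N : ENNReal) + 1) ≠ 0 := by
      intro h
      simpa using congrArg (fun x => x = 0) h
    have hnetop : ((N : ENNReal) + 1) ≠ ⊤ :=
      ENNReal.add_ne_top.mpr ⟨ENNReal.natCast_ne_top N, ENNReal.one_ne_top⟩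
    rw [ENNReal.le_div_iff_mul_le (Or.inl hne0) (Or.inl hnetop)]
    calc P (Y ⁻¹' B 0) * ((N : ENNReal) + 1) = ((N : ENNReal) + 1) * P (Y ⁻¹' B 0) :=
        mul_comm _ _
      _ ≤ (m : ENNReal) := h2
  -- identify the event {π ≤ α} with Y ⁻¹' B 0
  have hevent : {ω | π ω ≤ α} = Y ⁻¹' B 0 := by
    ext ω
    simp only [Set.mem_setOf_eq, Set.mem_preimage, hB, Set.mem_setOf_eq, hπ ω]
    have hNpos : (0:ℝ) < (N : ℝ) + 1 := by positivity
    set k := (Finset.univ.filter fun i : Fin N =>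
        T (W ω 0) (W ω) ≤ T (W ω i.succ) (W ω)).card with hk
    have hcount : (Finset.univ.filter fun i : Fin (N+1) => Y ω 0 ≤ Y ω i).card = k + 1 :=
      aux_succ (fun i : Fin (N+1) => Y ω 0 ≤ Y ω i) le_rfl
    rw [hcount, div_le_iff₀ hNpos]
    constructor
    · intro h
      have h1 : ((k + 1 : ℕ) : ℝ) ≤ α * ((N:ℝ) + 1) := by push_cast; linarith
      exact Nat.le_floor h1
    · intro h
      have h' : ((k + 1 : ℕ) : ℝ) ≤ (m : ℝ) := Nat.cast_le.mpr h
      have h2 : (m : ℝ) ≤ α * ((N:ℝ) + 1) :=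
        Nat.floor_le (le_of_lt (by positivity : (0:ℝ) < α * ((N:ℝ) + 1)))
      push_cast at h'
      linarith
  rw [hevent]
  have hdivtop : (m : ENNReal) / ((N : ENNReal) + 1) ≠ ⊤ :=
    (ENNReal.div_lt_top (ENNReal.natCast_ne_top m)
      (by intro h; simpa using congrArg (fun x => x = 0) h)).ne
  have h3 : (P (Y ⁻¹' B 0)).toReal ≤ ((m : ENNReal) / ((N : ENNReal) + 1)).toReal :=
    ENNReal.toReal_mono hdivtop hbound
  refine h3.trans ?_
  have h4 : ((m : ENNReal) / ((N : ENNReal) + 1)).toReal = (m : ℝ) / ((N : ℝ) + 1) := by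
    rw [ENNReal.toReal_div,
      ENNReal.toReal_add (ENNReal.natCast_ne_top N) ENNReal.one_ne_top]
    simp
  rw [h4, div_le_iff₀ (by positivity : (0:ℝ) < (N:ℝ) + 1)]
  exact Nat.floor_le (le_of_lt (by positivity : (0:ℝ) < α * ((N:ℝ) + 1)))
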